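/- Let (O, 𝔪) be a commutative reduced local ring, let K be its total ring of fractions (the localization of O at the multiplicative set of nonzerodivisors), and let Ō be the integral closure of O in K; identify O and 𝔪 with their images in Ō under the canonical (injective) map. Let I be an ideal of Ō, and regard I, 𝔪·I, O and 𝔪 as O-submodules of Ō. Then, with lengths taken in ℕ∞, length_O((I + O)/(𝔪·I + 𝔪)) = length_O((I + O)/(𝔪·I + O)) + 1. Equivalently, for the O-subalgebra Õ := I + O of Ō one has length_O(Õ/𝔪Õ) = length_O((I + O)/(𝔪·I + O)) + 1. -/

import Mathlib

/-- The length of an `R`-module `M`: the supremum of the lengths of strictly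
increasing chains of submodules of `M`, valued in `ℕ∞`. -/
noncomputable def moduleLength (R M : Type*) [Ring R] [AddCommGroup M] [Module R M] : ℕ∞ :=
  ⨆ p : LTSeries (Submodule R M), (p.length : ℕ∞)

lemma moduleLength_congr {R M N : Type*} [Ring R] [AddCommGroup M] [Module R M]
    [AddCommGroup N] [Module R N] (e : M ≃ₗ[R] N) :
    moduleLength R M = moduleLength R N := by
  have f : Submodule R M ≃o Submodule R N := Submodule.orderIsoMapComap e
  apply le_antisymm
  · exact iSup_le fun p => le_iSup_of_le (p.map f f.strictMono) le_rfl
  · exact iSup_le fun p => le_iSup_of_le (p.map f.symm f.symm.strictMono) le_rfl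

lemma moduleLength_quotient_atom {R M : Type*} [Ring R] [AddCommGroup M] [Module R M]
    (T : Submodule R M) (hT : IsAtom T) :
    moduleLength R M = moduleLength R (M ⧸ T) + 1 := by
  classical
  haveI : Nonempty (LTSeries (Submodule R (M ⧸ T))) := ⟨RelSeries.singleton _ ⊥⟩
  apply le_antisymm
  · -- ≤ direction
    apply iSup_le fun p => ?_
    set n := p.length with hn
    rcases Nat.eq_zero_or_pos n with h0 | hpos
    · have : (n : ℕ∞) = 0 := by exact_mod_cast h0
      rw [this]; exact zero_le
    set pp : ℕ → Submodule R M := fun i => p ⟨min i n, by omega⟩ with hpp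
    have ppmono : Monotone pp := fun i j hij => p.monotone (by simp [Fin.mk_le_mk]; omega)
    have ppstrict : ∀ i j, i < j → j ≤ n → pp i < pp j := fun i j hij hj =>
      p.strictMono (show (⟨min i n, by omega⟩ : Fin (n+1)) < ⟨min j n, by omega⟩ by
        simp [Fin.mk_lt_mk]; omega)
    have hex : ∃ i, n ≤ i ∨ T ≤ pp i := ⟨n, Or.inl le_rfl⟩
    set k := Nat.find hex with hk
    have hkn : k ≤ n := Nat.find_le (Or.inl le_rfl)
    have hkmin : ∀ j, j < k → j < n ∧ ¬ T ≤ pp j := by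
      intro j hj
      have := Nat.find_min hex hj
      push_neg at this
      exact ⟨by omega, this.2⟩
    have hkspec : n ≤ k ∨ T ≤ pp k := Nat.find_spec hex
    set q : ℕ → Submodule R (M ⧸ T) := fun i => Submodule.map T.mkQ (pp i) with hq
    have qmono : Monotone q := fun i j h => Submodule.map_mono (ppmono h)
    have hcomap : ∀ i j, q i = q j → T ⊔ pp i = T ⊔ pp j := by
      intro i j heq
      have := congrArg (Submodule.comap T.mkQ) heq
      rwa [Submodule.comap_map_mkQ, Submodule.comap_map_mkQ] at this
    have hA : ∀ i j, i < j → j ≤ n → ¬ T ≤ pp j → q i < q j := by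
      intro i j hij hjn hTj
      refine lt_of_le_of_ne (qmono hij.le) fun heq => ?_
      have hTj' : T ⊓ pp j = ⊥ :=
        hT.2 _ (lt_of_le_of_ne inf_le_left fun h => hTj (inf_eq_left.mp h))
      have hcom := hcomap i j heq
      have hle : pp j ≤ pp i := by
        intro x hx
        have hx2 : x ∈ T ⊔ pp i := by
          rw [hcom]; exact Submodule.mem_sup_right hx
        obtain ⟨t, ht, y, hy, rfl⟩ := Submodule.mem_sup.mp hx2
        have htj : t ∈ pp j := by
          have : (t + y) - y ∈ pp j := sub_mem hx (ppmono hij.le hy)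
          simpa using this
        have : t ∈ T ⊓ pp j := ⟨ht, htj⟩
        rw [hTj'] at this
        simp only [Submodule.mem_bot] at this
        simpa [this] using hy
      exact (ppstrict i j hij hjn).not_ge hle
    have hB : ∀ i j, i < j → j ≤ n → T ≤ pp i → q i < q j := by
      intro i j hij hjn hTi
      refine lt_of_le_of_ne (qmono hij.le) fun heq => ?_
      have hcom := hcomap i j heq
      rw [sup_eq_right.mpr hTi, sup_eq_right.mpr (hTi.trans (ppmono hij.le))] at hcom
      exact (ppstrict i j hij hjn).ne hcom
    set idx : ℕ → ℕ := fun v => if v < k then v else v + 1 with hidx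
    have rstep : ∀ v, v + 1 ≤ n - 1 → q (idx v) < q (idx (v+1)) := by
      intro v hv
      by_cases h1 : v + 1 < k
      · rw [show idx v = v by simp [hidx]; omega, show idx (v+1) = v+1 by simp [hidx]; omega]
        exact hA v (v+1) (by omega) (by omega) (hkmin _ h1).2
      by_cases h2 : v < k
      · have hk1 : k = v + 1 := by omega
        have hTk : T ≤ pp k := by
          rcases hkspec with h | h
          · omega
          · exact h
        rw [show idx v = v by simp [hidx]; omega, show idx (v+1) = v+2 by simp [hidx]; omega]
        calc q v ≤ q k := qmono (by omega)
          _ < q (v+2) := hB k (v+2) (by omega) (by omega) hTk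
      · have hTk : T ≤ pp k := by
          rcases hkspec with h | h
          · omega
          · exact h
        rw [show idx v = v + 1 by simp [hidx]; omega, show idx (v+1) = v+2 by simp [hidx]; omega]
        exact hB (v+1) (v+2) (by omega) (by omega) (hTk.trans (ppmono (by omega)))
    set r : LTSeries (Submodule R (M ⧸ T)) :=
      { length := n - 1
        toFun := fun j => q (idx j.val)
        step := fun j => by
          have := rstep j.val (by omega)
          simpa using this } with hr
    have hlen : (↑(n - 1) : ℕ∞) ≤ moduleLength R (M ⧸ T) := le_iSup_of_le r le_rfl
    have h1 : ((n - 1 : ℕ) : ℕ∞) + 1 = (n : ℕ∞) := by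
      norm_cast
      omega
    rw [← h1]
    exact add_le_add_left hlen 1
  · -- ≥ direction
    rw [moduleLength, ENat.iSup_add]
    apply iSup_le fun s => ?_
    have hstrict : StrictMono (Submodule.comap T.mkQ :
        Submodule R (M ⧸ T) → Submodule R M) :=
      Submodule.comap_strictMono_of_surjective T.mkQ_surjective
    have hbot : (⊥ : Submodule R M) < (s.map _ hstrict).head := by
      rw [LTSeries.head_map]
      calc (⊥ : Submodule R M) < T := hT.1.bot_lt
        _ ≤ Submodule.comap T.mkQ s.head := by
            intro x hx
            have h0 : T.mkQ x = 0 := (Submodule.Quotient.mk_eq_zero T).mpr hx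
            simp only [Submodule.mem_comap, h0]
            exact zero_mem _
    refine le_iSup_of_le ((s.map _ hstrict).cons ⊥ hbot) ?_
    have : ((s.map _ hstrict).cons ⊥ hbot).length = s.length + 1 := by
      simp
    rw [this]
    push_cast
    exact le_rfl


set_option maxHeartbeats 1000000 in
set_option synthInstance.maxHeartbeats 400000 in
/-- for a reduced local ring `(O, 𝔪)` with total ring of fractions `K`
and integral closure `Ō = integralClosure O K`, and an ideal `I` of `Ō`, one has
`length_O((I + O)/(𝔪I + 𝔪)) = length_O((I + O)/(𝔪I + O)) + 1` in `ℕ∞`. -/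
theorem length_I_add_O_quotients
    (O : Type*) [CommRing O] [IsLocalRing O] [IsReduced O]
    (K : Type*) [CommRing K] [Algebra O K] [IsFractionRing O K]
    (I : Ideal ↥(integralClosure O K))
    (OA : Submodule O ↥(integralClosure O K))
    (hOA : OA = LinearMap.range (Algebra.linearMap O ↥(integralClosure O K)))
    (mI : Submodule O ↥(integralClosure O K))
    (hmI : mI = (IsLocalRing.maximalIdeal O) • (I.restrictScalars O))
    (mO : Submodule O ↥(integralClosure O K))
    (hmO : mO = Submodule.map (Algebra.linearMap O ↥(integralClosure O K))
      (IsLocalRing.maximalIdeal O)) :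
    moduleLength O
        (↥(I.restrictScalars O ⊔ OA) ⧸
          Submodule.comap (I.restrictScalars O ⊔ OA).subtype (mI ⊔ mO)) =
      moduleLength O
          (↥(I.restrictScalars O ⊔ OA) ⧸
            Submodule.comap (I.restrictScalars O ⊔ OA).subtype (mI ⊔ OA)) + 1 := by
  classical
  set ι := Algebra.linearMap O ↥(integralClosure O K) with hι
  set N : Submodule O ↥(integralClosure O K) := I.restrictScalars O ⊔ OA with hN
  set A : Submodule O ↥N := Submodule.comap N.subtype (mI ⊔ mO) with hA
  set B : Submodule O ↥N := Submodule.comap N.subtype (mI ⊔ OA) with hB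
  -- injectivity of the canonical map
  have hinj : Function.Injective ι := by
    intro a b h
    apply IsFractionRing.injective O K
    exact congrArg Subtype.val h
  -- A ≤ B
  have hmOOA : mO ≤ OA := by
    rw [hmO, hOA]
    exact LinearMap.map_le_range
  have hAB : A ≤ B := Submodule.comap_mono (sup_le_sup_left hmOOA _)
  -- mI ⊔ mO is contained in the ideal generated by 𝔪 in Ō
  have hsub : mI ⊔ mO ≤ (Ideal.map (algebraMap O ↥(integralClosure O K))
      (IsLocalRing.maximalIdeal O)).restrictScalars O := by
    apply sup_le
    · rw [hmI, Submodule.smul_le]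
      intro r hr x _
      have : r • x = algebraMap O ↥(integralClosure O K) r * x := by
        rw [Algebra.smul_def]
      show r • x ∈ Ideal.map (algebraMap O ↥(integralClosure O K)) (IsLocalRing.maximalIdeal O)
      rw [this]
      exact Ideal.mul_mem_right _ _ (Ideal.mem_map_of_mem _ hr)
    · rw [hmO]
      rintro _ ⟨a, ha, rfl⟩
      exact Ideal.mem_map_of_mem _ ha
  -- 1 is not in mI ⊔ mO
  have hone : (1 : ↥(integralClosure O K)) ∉ mI ⊔ mO := by
    intro h1
    have h1' : (1 : ↥(integralClosure O K)) ∈ Ideal.map (algebraMap O ↥(integralClosure O K)) (IsLocalRing.maximalIdeal O) :=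
      hsub h1
    have htop : Ideal.map (algebraMap O ↥(integralClosure O K)) (IsLocalRing.maximalIdeal O) = ⊤ :=
      (Ideal.eq_top_iff_one _).mpr h1'
    have hker : RingHom.ker (algebraMap O ↥(integralClosure O K)) ≤ IsLocalRing.maximalIdeal O := by
      have : RingHom.ker (algebraMap O ↥(integralClosure O K)) = ⊥ :=
        (RingHom.injective_iff_ker_eq_bot _).mp hinj
      rw [this]; exact bot_le
    obtain ⟨Q, hQmax, hQ⟩ :=
      Ideal.exists_ideal_over_maximal_of_isIntegral (S := ↥(integralClosure O K))
        (IsLocalRing.maximalIdeal O) hker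
    have hle : Ideal.map (algebraMap O ↥(integralClosure O K)) (IsLocalRing.maximalIdeal O) ≤ Q := by
      rw [Ideal.map_le_iff_le_comap, hQ]
    rw [htop] at hle
    exact hQmax.ne_top (top_le_iff.mp hle)
  -- 1 ∈ N
  have h1N : (1 : ↥(integralClosure O K)) ∈ N := by
    apply Submodule.mem_sup_right
    rw [hOA]
    exact ⟨1, by rw [hι, Algebra.linearMap_apply, map_one]⟩
  set x1 : ↥N := ⟨1, h1N⟩ with hx1
  have hx1B : x1 ∈ B := by
    show (x1 : ↥(integralClosure O K)) ∈ mI ⊔ OA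
    apply Submodule.mem_sup_right
    rw [hOA]
    exact ⟨1, by rw [hι, Algebra.linearMap_apply, map_one]⟩
  have hx1A : x1 ∉ A := fun h => hone h
  -- key computation
  have key : ∀ x : ↥N, x ∈ B → x ∉ A → ∀ y : ↥N, y ∈ B → ∃ r : O, y - r • x ∈ A := by
    intro x hxB hxA y hyB
    have hxB' : (x : ↥(integralClosure O K)) ∈ mI ⊔ OA := hxB
    have hyB' : (y : ↥(integralClosure O K)) ∈ mI ⊔ OA := hyB
    obtain ⟨m, hm, o, ho, hxeq⟩ := Submodule.mem_sup.mp hxB'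
    rw [hOA] at ho
    obtain ⟨a, rfl⟩ := ho
    obtain ⟨m', hm', o', ho', hyeq⟩ := Submodule.mem_sup.mp hyB'
    rw [hOA] at ho'
    obtain ⟨b, rfl⟩ := ho'
    have ha : a ∉ IsLocalRing.maximalIdeal O := by
      intro ha
      apply hxA
      show (x : ↥(integralClosure O K)) ∈ mI ⊔ mO
      rw [← hxeq]
      exact Submodule.add_mem_sup hm (by rw [hmO]; exact ⟨a, ha, rfl⟩)
    have hu : IsUnit a := by
      by_contra hu
      exact ha hu
    obtain ⟨u, rfl⟩ := hu
    refine ⟨b * (↑u⁻¹ : Oˣ), ?_⟩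
    show ((y - (b * (↑u⁻¹ : Oˣ)) • x : ↥N) : ↥(integralClosure O K)) ∈ mI ⊔ mO
    have hcoe : ((y - (b * (↑u⁻¹ : Oˣ)) • x : ↥N) : ↥(integralClosure O K))
        = (y : ↥(integralClosure O K)) - (b * (↑u⁻¹ : Oˣ)) • (x : ↥(integralClosure O K)) := rfl
    have hsm : (b * (↑u⁻¹ : Oˣ)) • ι (u : O) = ι b := by
      rw [← map_smul, smul_eq_mul, mul_assoc]
      norm_cast
      simp
    have heq2 : ((y - (b * (↑u⁻¹ : Oˣ)) • x : ↥N) : ↥(integralClosure O K))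
        = m' - (b * (↑u⁻¹ : Oˣ)) • m := by
      rw [hcoe, ← hxeq, ← hyeq, smul_add, hsm]
      abel
    rw [heq2]
    exact Submodule.mem_sup_left (sub_mem hm' (Submodule.smul_mem _ _ hm))
  -- T := B/A is an atom
  set T : Submodule O (↥N ⧸ A) := Submodule.map A.mkQ B with hT
  have hatom : IsAtom T := by
    constructor
    · intro hbot
      have : A.mkQ x1 ∈ T := Submodule.mem_map_of_mem hx1B
      rw [hbot] at this
      simp only [Submodule.mem_bot, Submodule.mkQ_apply,
        Submodule.Quotient.mk_eq_zero] at this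
      exact hx1A this
    · intro C hC
      by_contra hne
      obtain ⟨c, hcC, hc0⟩ := Submodule.exists_mem_ne_zero_of_ne_bot hne
      obtain ⟨x, hxB, hxc⟩ := hC.le hcC
      have hxA : x ∉ A := by
        intro hxA
        apply hc0
        rw [← hxc]
        simpa [Submodule.Quotient.mk_eq_zero] using hxA
      have hTC : T ≤ C := by
        rintro _ ⟨y, hyB, rfl⟩
        obtain ⟨r, hr⟩ := key x hxB hxA y hyB
        have h0 : A.mkQ (y - r • x) = 0 := (Submodule.Quotient.mk_eq_zero A).mpr hr
        rw [map_sub, map_smul, sub_eq_zero] at h0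
        rw [h0, hxc]
        exact Submodule.smul_mem _ _ hcC
      exact hC.ne (le_antisymm hC.le hTC)
  -- conclude
  have e := Submodule.quotientQuotientEquivQuotient A B hAB
  calc moduleLength O (↥N ⧸ A)
      = moduleLength O ((↥N ⧸ A) ⧸ T) + 1 := moduleLength_quotient_atom T hatom
    _ = moduleLength O (↥N ⧸ B) + 1 := by rw [moduleLength_congr e]
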